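/- For each N ≥ 1 define h_N: (0,∞) → R by h_N(x) = (s/√N)·∏_{j=1}^{s-1}(1 - j/N) for x ∈ ((s-1)/√N, s/√N], s = 1, 2, .... Then h_N(x) ≤ 4·max(x,1)·exp(-x²/2) for all x > 0. -/

import Mathlib

open Real

/-- `h_N(x) = (s/√N) ∏_{j=1}^{s-1} (1 - j/N)` for `x ∈ ((s-1)/√N, s/√N]`,
i.e. with `s = ⌈√N x⌉`. -/
noncomputable def hN (N : ℕ) (x : ℝ) : ℝ :=
  ((⌈Real.sqrt N * x⌉₊ : ℝ) / Real.sqrt N) *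
    ∏ j ∈ Finset.Icc 1 (⌈Real.sqrt N * x⌉₊ - 1), (1 - (j : ℝ) / N)

lemma sum_Icc_id (m : ℕ) : ∑ j ∈ Finset.Icc 1 m, (j : ℝ) = m * (m + 1) / 2 := by
  induction m with
  | zero => simp
  | succ n ih =>
    rw [Finset.sum_Icc_succ_top (by omega), ih]
    push_cast
    ring

/-- `h_N(x) ≤ 4 max(x,1) e^{-x²/2}` for all `x > 0`. -/
theorem hN_bound (N : ℕ) (hN1 : 1 ≤ N) (x : ℝ) (hx : 0 < x) :
    hN N x ≤ 4 * max x 1 * Real.exp (-x ^ 2 / 2) := by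
  have hNpos : (0 : ℝ) < N := by exact_mod_cast hN1
  have hsq1 : (1 : ℝ) ≤ Real.sqrt N := by
    rw [show (1:ℝ) = Real.sqrt 1 by simp]
    exact Real.sqrt_le_sqrt (by exact_mod_cast hN1)
  have hsqpos : (0 : ℝ) < Real.sqrt N := lt_of_lt_of_le one_pos hsq1
  set s := ⌈Real.sqrt N * x⌉₊ with hs
  have hs1 : 1 ≤ s := by
    rw [hs]
    exact Nat.one_le_iff_ne_zero.mpr (by
      simp [Nat.ceil_eq_zero, not_le]
      positivity)
  rcases le_or_gt s N with hsN | hsN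
  · -- s ≤ N
    have hxs : Real.sqrt N * x ≤ (s : ℝ) := Nat.le_ceil _
    have hsx : (s : ℝ) < Real.sqrt N * x + 1 :=
      Nat.ceil_lt_add_one (by positivity)
    -- product bound
    have hprod : ∏ j ∈ Finset.Icc 1 (s - 1), (1 - (j : ℝ) / N) ≤
        Real.exp (-(((s : ℝ) - 1) * s / (2 * N))) := by
      calc ∏ j ∈ Finset.Icc 1 (s - 1), (1 - (j : ℝ) / N)
          ≤ ∏ j ∈ Finset.Icc 1 (s - 1), Real.exp (-(j : ℝ) / N) := by
            apply Finset.prod_le_prod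
            · intro j hj
              simp only [Finset.mem_Icc] at hj
              have : (j : ℝ) ≤ N := by
                have : j ≤ N := le_trans hj.2 (by omega)
                exact_mod_cast this
              have := div_le_one_of_le₀ this hNpos.le
              linarith
            · intro j hj
              have h := Real.add_one_le_exp (-((j : ℝ) / N))
              rw [neg_div]
              linarith
        _ = Real.exp (∑ j ∈ Finset.Icc 1 (s - 1), (-(j : ℝ) / N)) := by
            rw [Real.exp_sum]
        _ = Real.exp (-(((s : ℝ) - 1) * s / (2 * N))) := by
            congr 1
            have : ∑ j ∈ Finset.Icc 1 (s - 1), (-(j : ℝ) / N)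
                = -((∑ j ∈ Finset.Icc 1 (s - 1), (j : ℝ)) / N) := by
              simp [neg_div, Finset.sum_div]
            rw [this, sum_Icc_id]
            have hcast : ((s - 1 : ℕ) : ℝ) = (s : ℝ) - 1 := by
              have : (1 : ℕ) ≤ s := hs1
              push_cast [this]; ring
            rw [hcast]
            ring
    -- exponent bound
    have hexp : Real.exp (-(((s : ℝ) - 1) * s / (2 * N))) ≤ 2 * Real.exp (-x ^ 2 / 2) := by
      have hx2 : x ^ 2 ≤ (s : ℝ) ^ 2 / N := by
        have h1 : Real.sqrt N * x ≤ (s : ℝ) := hxs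
        have h2 : (Real.sqrt N * x) ^ 2 ≤ (s : ℝ) ^ 2 :=
          pow_le_pow_left₀ (by positivity) h1 2
        have h3 : (Real.sqrt N) ^ 2 = (N : ℝ) := Real.sq_sqrt hNpos.le
        rw [mul_pow, h3] at h2
        rw [le_div_iff₀ hNpos]
        nlinarith
      have hsN' : (s : ℝ) ≤ N := by exact_mod_cast hsN
      have key : -(((s : ℝ) - 1) * s / (2 * N)) ≤ -x ^ 2 / 2 + 1 / 2 := by
        have h4 : (s : ℝ) / (2 * N) ≤ 1 / 2 := by
          rw [div_le_div_iff₀ (by positivity) (by norm_num)]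
          linarith
        have h5 : x ^ 2 / 2 ≤ (s : ℝ) ^ 2 / N / 2 := by linarith
        have h6 : (s : ℝ) ^ 2 / N / 2 = (s : ℝ) ^ 2 / (2 * N) := by ring
        have heq : ((s : ℝ) - 1) * s / (2 * N) = (s : ℝ) ^ 2 / (2 * N) - s / (2 * N) := by
          ring
        linarith [h4, h5, h6, heq]
      calc Real.exp (-(((s : ℝ) - 1) * s / (2 * N)))
          ≤ Real.exp (-x ^ 2 / 2 + 1 / 2) := Real.exp_le_exp.mpr key
        _ = Real.exp (1 / 2) * Real.exp (-x ^ 2 / 2) := by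
            rw [← Real.exp_add]; ring_nf
        _ ≤ 2 * Real.exp (-x ^ 2 / 2) := by
            apply mul_le_mul_of_nonneg_right _ (Real.exp_nonneg _)
            have hlog : (1 : ℝ) / 2 ≤ Real.log 2 := by
              have := Real.log_two_gt_d9
              linarith
            calc Real.exp (1 / 2) ≤ Real.exp (Real.log 2) := Real.exp_le_exp.mpr hlog
              _ = 2 := Real.exp_log (by norm_num)
    -- front factor bound
    have hfront : (s : ℝ) / Real.sqrt N ≤ 2 * max x 1 := by
      rw [div_le_iff₀ hsqpos]
      have h1 : (s : ℝ) ≤ Real.sqrt N * x + 1 := hsx.le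
      have h2 : x ≤ max x 1 := le_max_left _ _
      have h3 : (1 : ℝ) ≤ max x 1 := le_max_right _ _
      have h4 : Real.sqrt N * x ≤ Real.sqrt N * max x 1 :=
        mul_le_mul_of_nonneg_left h2 hsqpos.le
      have h5 : (1 : ℝ) ≤ Real.sqrt N * max x 1 := by
        calc (1:ℝ) ≤ max x 1 := h3
          _ = 1 * max x 1 := (one_mul _).symm
          _ ≤ Real.sqrt N * max x 1 := by
              apply mul_le_mul_of_nonneg_right hsq1 (by linarith)
      calc (s : ℝ) ≤ Real.sqrt N * x + 1 := h1
        _ ≤ Real.sqrt N * max x 1 + Real.sqrt N * max x 1 := by linarith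
        _ = 2 * max x 1 * Real.sqrt N := by ring
    have hprodnn : (0 : ℝ) ≤ ∏ j ∈ Finset.Icc 1 (s - 1), (1 - (j : ℝ) / N) := by
      apply Finset.prod_nonneg
      intro j hj
      simp only [Finset.mem_Icc] at hj
      have : (j : ℝ) ≤ N := by
        have : j ≤ N := le_trans hj.2 (by omega)
        exact_mod_cast this
      have := div_le_one_of_le₀ this hNpos.le
      linarith
    have hfrontnn : (0 : ℝ) ≤ (s : ℝ) / Real.sqrt N := by positivity
    calc hN N x = ((s : ℝ) / Real.sqrt N) * ∏ j ∈ Finset.Icc 1 (s - 1), (1 - (j : ℝ) / N) := rfl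
      _ ≤ (2 * max x 1) * (2 * Real.exp (-x ^ 2 / 2)) := by
          apply mul_le_mul hfront (le_trans hprod hexp) hprodnn
          positivity
      _ = 4 * max x 1 * Real.exp (-x ^ 2 / 2) := by ring
  · -- s > N : product contains a zero factor
    have hmem : N ∈ Finset.Icc 1 (s - 1) := by
      simp only [Finset.mem_Icc]
      omega
    have hzero : ∏ j ∈ Finset.Icc 1 (s - 1), (1 - (j : ℝ) / N) = 0 := by
      apply Finset.prod_eq_zero hmem
      rw [div_self hNpos.ne']
      ring
    have : hN N x = 0 := by
      unfold hN
      rw [← hs, hzero, mul_zero]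
    rw [this]
    positivity
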